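/- The problem Inf_Q(P) always has a unique optimal solution: there exists a feasible point x* = (x_0*, x̄*) such that x_0 ≤ x_0* for every feasible x, and any two optimal solutions of Inf_Q(P) are equal. -/

import Mathlib

lemma aux_eq_of_norm_add {E : Type*} [NormedAddCommGroup E] [InnerProductSpace ℝ E]
    (a b : E) (keq : ‖a + b‖ = ‖a‖ + ‖b‖) (neq : ‖a‖ = ‖b‖) : a = b := by
  have hinner : (inner ℝ a b : ℝ) = ‖a‖ * ‖b‖ := by
    have h := norm_add_sq_real a b
    nlinarith [norm_nonneg (a + b), norm_nonneg a, norm_nonneg b]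
  have hzero : ‖a - b‖ ^ 2 = 0 := by
    have h := norm_sub_sq_real a b
    nlinarith
  have := pow_eq_zero_iff (n := 2) (by norm_num) |>.mp hzero
  exact sub_eq_zero.mp (norm_eq_zero.mp this)

/-- The problem `Inf_Q(P)` always has a unique optimal solution: there exists a feasible
point `x*` such that `x_0 ≤ x_0*` for every feasible `x`, and any two optimal solutions
coincide. -/
theorem stmt_0 (d m : ℕ) (hd : 1 ≤ d) (hm : 1 ≤ m)
    (p : Fin m → ℝ × EuclideanSpace ℝ (Fin d)) :
    ∃! x : ℝ × EuclideanSpace ℝ (Fin d),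
      (∀ i, ‖(p i).2 - x.2‖ ≤ (p i).1 - x.1) ∧
      ∀ y : ℝ × EuclideanSpace ℝ (Fin d),
        (∀ i, ‖(p i).2 - y.2‖ ≤ (p i).1 - y.1) → y.1 ≤ x.1 := by
  haveI : NeZero m := ⟨by omega⟩
  have hne : (Finset.univ : Finset (Fin m)).Nonempty := Finset.univ_nonempty
  set f : EuclideanSpace ℝ (Fin d) → ℝ :=
    fun v => Finset.univ.inf' hne fun i => (p i).1 - ‖(p i).2 - v‖ with hf
  have hle : ∀ (v : EuclideanSpace ℝ (Fin d)) (i : Fin m),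
      f v ≤ (p i).1 - ‖(p i).2 - v‖ := fun v i =>
    Finset.inf'_le _ (Finset.mem_univ i)
  have hge : ∀ (v : EuclideanSpace ℝ (Fin d)) (c : ℝ),
      (∀ i, c ≤ (p i).1 - ‖(p i).2 - v‖) → c ≤ f v := fun v c h =>
    Finset.le_inf' _ _ fun i _ => h i
  have hcont : Continuous f := by
    apply Continuous.finset_inf'_apply hne
    intro i _
    exact continuous_const.sub ((continuous_const.sub continuous_id).norm)
  set i0 : Fin m := 0
  set R : ℝ := ‖(p i0).2‖ + ((p i0).1 - f 0) + 1 with hR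
  have h0 : ‖(p i0).2‖ ≤ (p i0).1 - f 0 := by
    have := hle 0 i0; rw [sub_zero] at this; linarith
  have hRpos : (0 : ℝ) ≤ R := by
    have : (0:ℝ) ≤ ‖(p i0).2‖ := norm_nonneg _
    nlinarith
  obtain ⟨z, hzmem, hzmax⟩ :=
    (isCompact_closedBall (0 : EuclideanSpace ℝ (Fin d)) R).exists_isMaxOn
      ⟨0, Metric.mem_closedBall_self hRpos⟩ hcont.continuousOn
  have hglob : ∀ v : EuclideanSpace ℝ (Fin d), f v ≤ f z := by
    intro v
    by_cases hv : v ∈ Metric.closedBall (0 : EuclideanSpace ℝ (Fin d)) R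
    · exact hzmax hv
    · have hvn : R < ‖v‖ := by
        simpa [Metric.mem_closedBall, dist_zero_right] using hv
      have h1 : ‖v‖ - ‖(p i0).2‖ ≤ ‖(p i0).2 - v‖ := by
        have := norm_sub_norm_le v (p i0).2
        rwa [norm_sub_rev] at this
      have h2 : f v ≤ (p i0).1 - ‖(p i0).2 - v‖ := hle v i0
      have h3 : f 0 ≤ f z := hzmax (Metric.mem_closedBall_self hRpos)
      nlinarith
  refine ⟨(f z, z), ⟨fun i => by have := hle z i; linarith, fun y hy => ?_⟩, ?_⟩
  · exact (hge y.2 y.1 fun i => by linarith [hy i]).trans (hglob y.2)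
  · rintro x ⟨hxf, hxm⟩
    have hfeas : ∀ i, ‖(p i).2 - z‖ ≤ (p i).1 - f z := fun i => by have := hle z i; linarith
    have h1 : x.1 = f z := le_antisymm
      ((hge x.2 x.1 fun i => by linarith [hxf i]).trans (hglob x.2))
      (hxm (f z, z) hfeas)
    have h2 : x.2 = z := by
      set w : EuclideanSpace ℝ (Fin d) := (2 : ℝ)⁻¹ • (x.2 + z) with hw
      have hfw : f w ≤ f z := hglob w
      obtain ⟨i, -, hi⟩ := Finset.exists_mem_eq_inf' hne fun i => (p i).1 - ‖(p i).2 - w‖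
      set a : EuclideanSpace ℝ (Fin d) := (p i).2 - x.2 with hadef
      set b : EuclideanSpace ℝ (Fin d) := (p i).2 - z with hbdef
      have ha : ‖a‖ ≤ (p i).1 - f z := h1 ▸ hxf i
      have hb : ‖b‖ ≤ (p i).1 - f z := hfeas i
      have hab : a + b = (2 : ℝ) • ((p i).2 - w) := by
        rw [hw, hadef, hbdef]
        rw [smul_sub, smul_smul]
        norm_num
        module
      have habn : ‖a + b‖ = 2 * ‖(p i).2 - w‖ := by
        rw [hab, norm_smul]; norm_num
      have hwv : f w = (p i).1 - ‖(p i).2 - w‖ := hi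
      have key : ‖a + b‖ = ‖a‖ + ‖b‖ ∧ ‖a‖ = ‖b‖ := by
        have htri : ‖a + b‖ ≤ ‖a‖ + ‖b‖ := norm_add_le a b
        constructor <;> nlinarith [norm_nonneg a, norm_nonneg b]
      obtain ⟨keq, neq⟩ := key
      have hab2 : a = b := aux_eq_of_norm_add a b keq neq
      exact sub_right_injective (hadef ▸ hbdef ▸ hab2)
    exact Prod.ext h1 h2
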